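/- If α < β < ε_{Ω+1}, then Θ_X(α) < Θ_X(β) if and only if α* < Θ_X(β). -/

import Mathlib

open Ordinal Set

noncomputable section
open scoped Classical

/-- `Ω`, the first uncountable ordinal. -/
def OmegaO : Ordinal := (Cardinal.aleph 1).ord

/-- `ε_{Ω+1}`, the least `ε > Ω` with `ω ^ ε = ε`. -/
def epsOmega : Ordinal := nfp (fun a => Ordinal.omega0 ^ a) (OmegaO + 1)

lemma omega0_le_OmegaO : Ordinal.omega0 ≤ OmegaO := by
  rw [OmegaO, ← Cardinal.ord_aleph0]
  exact Cardinal.ord_le_ord.2 (Cardinal.aleph0_le_aleph 1)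

lemma one_lt_OmegaO : 1 < OmegaO :=
  lt_of_lt_of_le Ordinal.one_lt_omega0 omega0_le_OmegaO

lemma OmegaO_pos : 0 < OmegaO := lt_trans zero_lt_one one_lt_OmegaO

/-- `ξ*`, the maximal coefficient in the `Ω`-normal form of `ξ`. -/
def star (ξ : Ordinal) : Ordinal :=
  if h0 : ξ = 0 then 0
  else if hl : log OmegaO ξ < ξ then
    max (max (star (log OmegaO ξ)) (star (ξ % OmegaO ^ log OmegaO ξ)))
      (ξ / OmegaO ^ log OmegaO ξ)
  else 0
termination_by ξ
decreasing_by
  · exact hl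
  · exact mod_opow_log_lt_self _ h0

/-- The generalized fundamental sequence `ξ[θ]`. -/
def fs (ξ θ : Ordinal) : Ordinal :=
  if h0 : ξ ≤ 1 then 0
  else if hmod : ξ % OmegaO ^ log OmegaO ξ ≠ 0 then
    OmegaO ^ log OmegaO ξ * (ξ / OmegaO ^ log OmegaO ξ) + fs (ξ % OmegaO ^ log OmegaO ξ) θ
  else if Order.IsSuccLimit (ξ / OmegaO ^ log OmegaO ξ) then OmegaO ^ log OmegaO ξ * θ
  else if hβ : ξ / OmegaO ^ log OmegaO ξ = 1 then
    (if hlog : Order.IsSuccLimit (log OmegaO ξ) then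
       (if hll : log OmegaO ξ < ξ then OmegaO ^ fs (log OmegaO ξ) θ else 0)
     else OmegaO ^ Ordinal.pred (log OmegaO ξ) * θ)
  else
    OmegaO ^ log OmegaO ξ * Ordinal.pred (ξ / OmegaO ^ log OmegaO ξ) + fs (OmegaO ^ log OmegaO ξ) θ
termination_by ξ
decreasing_by
  · exact mod_opow_log_lt_self _ (by intro h; exact h0 (by simp [h]))
  · exact hll
  · -- `Ω ^ log Ω ξ < ξ`
    have hξ0 : ξ ≠ 0 := by intro h; exact h0 (by simp [h])
    have hle : OmegaO ^ log OmegaO ξ ≤ ξ := opow_log_le_self _ hξ0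
    have hpos : 0 < OmegaO ^ log OmegaO ξ :=
      opow_pos _ OmegaO_pos
    have hβ0 : 0 < ξ / OmegaO ^ log OmegaO ξ :=
      Ordinal.div_pos (by positivity) |>.2 hle
    have hβ1 : 1 < ξ / OmegaO ^ log OmegaO ξ :=
      lt_of_le_of_ne (by rw [← Ordinal.succ_zero]; exact Order.succ_le_of_lt hβ0) (Ne.symm hβ)
    calc OmegaO ^ log OmegaO ξ = OmegaO ^ log OmegaO ξ * 1 := (mul_one _).symm
      _ < OmegaO ^ log OmegaO ξ * (ξ / OmegaO ^ log OmegaO ξ) := by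
          first | exact mul_lt_mul_of_pos_left hβ1 hpos | exact (mul_lt_mul_iff_right₀ hpos).2 hβ1
      _ ≤ ξ := Ordinal.mul_div_le _ _

/-- The terminal part `τ(ξ)`. -/
def tau (ξ : Ordinal) : Ordinal :=
  if h0 : ξ = 0 then 0
  else if hmod : ξ % OmegaO ^ log OmegaO ξ ≠ 0 then tau (ξ % OmegaO ^ log OmegaO ξ)
  else if Order.IsSuccLimit (ξ / OmegaO ^ log OmegaO ξ) then ξ / OmegaO ^ log OmegaO ξ
  else if log OmegaO ξ = 0 then 1
  else if hlog : Order.IsSuccLimit (log OmegaO ξ) then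
    (if hll : log OmegaO ξ < ξ then tau (log OmegaO ξ) else 0)
  else OmegaO
termination_by ξ
decreasing_by
  · exact mod_opow_log_lt_self _ h0
  · exact hll

/-- The collapsing function `Θ_X`. -/
def ThetaF (X : Set Ordinal) (ξ : Ordinal) : Ordinal :=
  sInf {θ | θ ∈ X ∧ star ξ < θ ∧ ∀ ζ, ζ < ξ → star ζ < θ → ThetaF X ζ < θ}
termination_by ξ
decreasing_by exact by assumption

/-- `Ω_n`: the tower `Ω_0 = 1`, `Ω_{n+1} = Ω ^ Ω_n`. -/
def OmegaTow : ℕ → Ordinal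
  | 0 => 1
  | n + 1 => OmegaO ^ OmegaTow n

/-- `Θ_X(ε_{Ω+1}) = sup_n Θ_X(Ω_n)`. -/
def ThetaEps (X : Set Ordinal) : Ordinal := ⨆ n : ℕ, ThetaF X (OmegaTow n)

/-- `ε̂_{Ω+1}`. -/
def hatEps (X : Set Ordinal) : Set Ordinal :=
  {ξ | ξ < epsOmega ∧ star ξ < ThetaEps X}

/-- `X` is a club in `Ω`. -/
def IsClubBelowOmega (X : Set Ordinal) : Prop :=
  (∀ x ∈ X, x < OmegaO) ∧
  (∀ a, a < OmegaO → ∃ x ∈ X, a < x) ∧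
  (∀ S : Set Ordinal, S ⊆ X → S.Nonempty → sSup S < OmegaO → sSup S ∈ X)

/-- The set of limit points of `X` (below `Ω`). -/
def limitPtsOf (X : Set Ordinal) : Set Ordinal :=
  {x | 0 < x ∧ ∀ y, y < x → ∃ z ∈ X, y < z ∧ z < x}

/-- `FIX(X)`. -/
def FIXs (X : Set Ordinal) : Set Ordinal :=
  {ξ | ξ < epsOmega ∧ star (fs ξ 1) < star ξ ∧ star ξ = tau ξ ∧
    ∃ γ, ξ < γ ∧ γ < epsOmega ∧ star ξ = ThetaF X γ}

/-- `JUMP(X)`. -/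
def JUMPs (X : Set Ordinal) : Set Ordinal :=
  {0} ∪ {ξ | ∃ ζ, ξ = ζ + 1} ∪ FIXs X

/-- `Θ*`. -/
def ThetaStarF (X : Set Ordinal) (ξ : Ordinal) : Ordinal :=
  if ∃ ζ, ξ = ζ + 1 then ThetaF X (Ordinal.pred ξ)
  else if ξ ∈ FIXs X then tau ξ
  else 0

/-- `ξ̌`. -/
def checkF (X : Set Ordinal) (ξ : Ordinal) : Ordinal :=
  if 0 < ThetaStarF X ξ then OmegaO * (ξ / OmegaO) else ξ

/-- `ℙ`, the club of countable additively indecomposable ordinals. -/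
def PP : Set Ordinal := {x | x < OmegaO ∧ ∃ a, x = Ordinal.omega0 ^ a}

/-- `1 + Ord`, the club of nonzero countable ordinals. -/
def oneOrdS : Set Ordinal := {x | 0 < x ∧ x < OmegaO}

/-- `Θ^{(i)}(ξ)`. -/
def ThetaIter (X : Set Ordinal) (ξ : Ordinal) : ℕ → Ordinal
  | 0 => ThetaStarF X ξ
  | n + 1 => ThetaF X (fs (checkF X ξ) (ThetaIter X ξ n))

/-- A Buchholz system of fundamental sequences for `Θ_X`. -/
def IsBuchholz (X : Set Ordinal) (B : Ordinal → ℕ → Ordinal) : Prop :=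
  (∀ n, B 0 n = 0) ∧
  (∀ α ξ n, ξ ∈ hatEps X → OmegaO ≤ ξ → tau ξ < OmegaO → ξ = fs α (tau ξ) →
    B ξ n = fs α (B (tau ξ) n)) ∧
  (∀ ξ n, ξ ∈ hatEps X → 0 < tau (checkF X ξ) → tau (checkF X ξ) < OmegaO →
    B (ThetaF X ξ) n = ThetaF X (B (checkF X ξ) n + ThetaStarF X ξ)) ∧
  (∀ ξ n, ξ ∈ hatEps X → tau (checkF X ξ) = OmegaO →
    B (ThetaF X ξ) n = ThetaIter X ξ n)

/-- The additional clause for the `σ = Θ_{1+Ord}` Buchholz system. -/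
def SigmaExtra (B : Ordinal → ℕ → Ordinal) : Prop :=
  ∀ β n, β < OmegaO → B (ThetaF oneOrdS β) n = β

/-- The additional clauses for the `ϑ = Θ_ℙ` Buchholz system. -/
def VarthetaExtra (B : Ordinal → ℕ → Ordinal) : Prop :=
  (∀ α β n, 0 < β → (∀ α' < α, α' + β < α + β) → B (α + β) n = α + B β n) ∧
  (∀ β n, β < OmegaO → β ∈ JUMPs PP → B (ThetaF PP β) n = ThetaStarF PP β * n)


lemma log_lt_self_of_lt_eps {ξ : Ordinal} (h0 : ξ ≠ 0) (hξ : ξ < epsOmega) :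
    log OmegaO ξ < ξ := by
  rw [← lt_opow_iff_log_lt one_lt_OmegaO h0]
  rcases lt_trichotomy ξ OmegaO with h | h | h
  · calc ξ < OmegaO := h
      _ = OmegaO ^ (1:Ordinal) := (opow_one _).symm
      _ ≤ OmegaO ^ ξ := opow_le_opow_right OmegaO_pos (Ordinal.one_le_iff_ne_zero.2 h0)
  · calc ξ = OmegaO ^ (1:Ordinal) := by rw [opow_one, h]
      _ < OmegaO ^ ξ := by
        rw [opow_lt_opow_iff_right one_lt_OmegaO, h]; exact one_lt_OmegaO
  · have hne : Ordinal.omega0 ^ ξ ≠ ξ := by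
      intro he
      have : epsOmega ≤ ξ := by
        apply nfp_le_fp (isNormal_opow one_lt_omega0).monotone _ (le_of_eq he)
        rw [Ordinal.add_one_eq_succ, Order.succ_le_iff]; exact h
      exact absurd hξ (not_lt.2 this)
    calc ξ < Ordinal.omega0 ^ ξ :=
          lt_of_le_of_ne (right_le_opow ξ one_lt_omega0) (Ne.symm hne)
      _ ≤ OmegaO ^ ξ := opow_le_opow_left ξ omega0_le_OmegaO

lemma star_eq {ξ : Ordinal} (h0 : ξ ≠ 0) (hξ : ξ < epsOmega) :
    star ξ = max (max (star (log OmegaO ξ)) (star (ξ % OmegaO ^ log OmegaO ξ)))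
      (ξ / OmegaO ^ log OmegaO ξ) := by
  rw [_root_.star, dif_neg h0, dif_pos (log_lt_self_of_lt_eps h0 hξ)]

lemma div_opow_log_lt_OmegaO {ξ : Ordinal} : ξ / OmegaO ^ log OmegaO ξ < OmegaO := by
  rw [Ordinal.div_lt (opow_ne_zero _ OmegaO_pos.ne'), ← opow_succ]
  exact lt_opow_succ_log_self one_lt_OmegaO ξ

lemma star_lt_OmegaO : ∀ ξ : Ordinal, ξ < epsOmega → star ξ < OmegaO := by
  intro ξ
  induction ξ using Ordinal.induction with
  | h ξ IH =>
    intro hξ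
    rcases eq_or_ne ξ 0 with rfl | h0
    · rw [_root_.star]; simp [OmegaO_pos]
    · rw [star_eq h0 hξ]
      have hlog := log_lt_self_of_lt_eps h0 hξ
      have hmod := mod_opow_log_lt_self OmegaO h0
      exact max_lt (max_lt (IH _ hlog (hlog.trans hξ)) (IH _ hmod (hmod.trans hξ)))
        div_opow_log_lt_OmegaO

lemma ThetaF_def (X : Set Ordinal) (ξ : Ordinal) :
    ThetaF X ξ =
      sInf {θ | θ ∈ X ∧ star ξ < θ ∧ ∀ ζ, ζ < ξ → star ζ < θ → ThetaF X ζ < θ} := by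
  rw [ThetaF]

lemma ThetaF_lt_OmegaO {X : Set Ordinal} (hX : IsClubBelowOmega X) (ξ : Ordinal) :
    ThetaF X ξ < OmegaO := by
  rw [ThetaF_def]
  set S := {θ | θ ∈ X ∧ star ξ < θ ∧ ∀ ζ, ζ < ξ → star ζ < θ → ThetaF X ζ < θ} with hS
  rcases S.eq_empty_or_nonempty with h | h
  · rw [h, Ordinal.sInf_empty]; exact OmegaO_pos
  · exact hX.1 _ (csInf_mem h).1

/-- countable sets of ordinals have sSup < Ω when all elements are < Ω -/

lemma sSup_lt_OmegaO {S : Set Ordinal} (hc : S.Countable) (hb : ∀ x ∈ S, x < OmegaO) :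
    sSup S < OmegaO := by
  rcases S.eq_empty_or_nonempty with rfl | hne
  · rw [csSup_empty]; exact OmegaO_pos
  · obtain ⟨f, rfl⟩ := hc.exists_eq_range hne
    have : sSup (range f) = ⨆ n, f n := rfl
    rw [this, OmegaO]
    apply Cardinal.iSup_lt_ord_lift_of_isRegular Cardinal.isRegular_aleph_one
    · rw [Cardinal.mk_nat, Cardinal.lift_aleph0]
      exact Cardinal.aleph0_lt_aleph_one
    · intro i; exact hb _ (mem_range_self i)

lemma countable_Iio {δ : Ordinal} (hδ : δ < OmegaO) : (Set.Iio δ).Countable := by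
  have h1 : δ.card < Cardinal.aleph 1 := Cardinal.lt_ord.1 hδ
  have h2 : δ.card ≤ Cardinal.aleph0 := by
    rwa [show (1 : Ordinal) = Order.succ 0 from (Ordinal.succ_zero).symm,
      Cardinal.aleph_succ, Order.lt_succ_iff, Cardinal.aleph_zero] at h1
  rw [← Set.countable_coe_iff, ← Cardinal.mk_le_aleph0_iff, Ordinal.mk_Iio_ordinal]
  calc Cardinal.lift.{_+1} δ.card ≤ Cardinal.lift.{_+1} Cardinal.aleph0 := Cardinal.lift_le.2 h2
    _ = Cardinal.aleph0 := Cardinal.lift_aleph0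

/-- Countable closure sets approximating `{ζ | star ζ < δ}`. -/

def CS (δ : Ordinal) : ℕ → Set Ordinal
  | 0 => {0}
  | n + 1 => CS δ n ∪
      (fun p : Ordinal × Ordinal × Ordinal => OmegaO ^ p.1 * p.2.1 + p.2.2) ''
        ((CS δ n) ×ˢ (Set.Iio δ ×ˢ CS δ n))

lemma CS_countable {δ : Ordinal} (hδ : δ < OmegaO) : ∀ n, (CS δ n).Countable := by
  intro n
  induction n with
  | zero => exact countable_singleton 0
  | succ n ih =>
    exact ih.union ((ih.prod ((countable_Iio hδ).prod ih)).image _)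

lemma CS_mono {δ : Ordinal} {m n : ℕ} (h : m ≤ n) : CS δ m ⊆ CS δ n := by
  induction n with
  | zero => simpa [Nat.le_zero.1 h] using subset_rfl
  | succ n ih =>
    rcases Nat.le_succ_iff.1 h with h' | rfl
    · exact (ih h').trans (subset_union_left)
    · rfl

lemma mem_CS {δ : Ordinal} : ∀ ζ : Ordinal, ζ < epsOmega → star ζ < δ → ∃ n, ζ ∈ CS δ n := by
  intro ζ
  induction ζ using Ordinal.induction with
  | h ζ IH =>
    intro hζ hs
    rcases eq_or_ne ζ 0 with rfl | h0
    · exact ⟨0, rfl⟩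
    · have hlog := log_lt_self_of_lt_eps h0 hζ
      have hmod := mod_opow_log_lt_self OmegaO h0
      rw [star_eq h0 hζ] at hs
      obtain ⟨m, hm⟩ := IH _ hlog (hlog.trans hζ)
        (lt_of_le_of_lt (le_max_of_le_left (le_max_left _ _)) hs)
      obtain ⟨k, hk⟩ := IH _ hmod (hmod.trans hζ)
        (lt_of_le_of_lt (le_max_of_le_left (le_max_right _ _)) hs)
      refine ⟨max m k + 1, Or.inr ?_⟩
      refine ⟨⟨log OmegaO ζ, ζ / OmegaO ^ log OmegaO ζ, ζ % OmegaO ^ log OmegaO ζ⟩,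
        ⟨CS_mono (le_max_left m k) hm, lt_of_le_of_lt (le_max_right _ _) hs,
          CS_mono (le_max_right m k) hk⟩, ?_⟩
      exact Ordinal.div_add_mod ζ (OmegaO ^ log OmegaO ζ)

lemma countable_star_lt {δ : Ordinal} (hδ : δ < OmegaO) :
    {ζ : Ordinal | ζ < epsOmega ∧ star ζ < δ}.Countable := by
  apply Set.Countable.mono _ (countable_iUnion (CS_countable hδ))
  intro ζ ⟨h1, h2⟩
  obtain ⟨n, hn⟩ := mem_CS ζ h1 h2
  exact mem_iUnion.2 ⟨n, hn⟩

lemma TS_nonempty {X : Set Ordinal} (hX : IsClubBelowOmega X) {ξ : Ordinal}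
    (hξ : ξ < epsOmega) :
    {θ | θ ∈ X ∧ star ξ < θ ∧ ∀ ζ, ζ < ξ → star ζ < θ → ThetaF X ζ < θ}.Nonempty := by
  classical
  -- supremum of collapses of ordinals with small coefficients
  set B : Ordinal → Ordinal := fun c => sSup (ThetaF X '' {ζ | ζ < ξ ∧ star ζ < c}) with hB
  have hsub : ∀ c, {ζ | ζ < ξ ∧ star ζ < c} ⊆ {ζ | ζ < epsOmega ∧ star ζ < c} :=
    fun c ζ hz => ⟨hz.1.trans hξ, hz.2⟩
  have hBlt : ∀ c, c < OmegaO → B c < OmegaO := by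
    intro c hc
    apply sSup_lt_OmegaO (((countable_star_lt hc).mono (hsub c)).image _)
    rintro x ⟨ζ, -, rfl⟩
    exact ThetaF_lt_OmegaO hX ζ
  have hBge : ∀ c, c < OmegaO → ∀ ζ, ζ < ξ → star ζ < c → ThetaF X ζ ≤ B c := by
    intro c hc ζ h1 h2
    have hcnt : (ThetaF X '' {ζ | ζ < ξ ∧ star ζ < c}).Countable :=
      ((countable_star_lt hc).mono (hsub c)).image _
    have : Countable ↥(ThetaF X '' {ζ | ζ < ξ ∧ star ζ < c}) := hcnt.to_subtype
    exact le_csSup Ordinal.bddAbove_of_small ⟨ζ, ⟨h1, h2⟩, rfl⟩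
  -- successor step
  have key : ∀ c : {c : Ordinal // c ∈ X}, ∃ x, x ∈ X ∧ max c.1 (B c.1) < x := by
    intro ⟨c, hc⟩
    exact hX.2.1 _ (max_lt (hX.1 _ hc) (hBlt c (hX.1 _ hc)))
  choose g hg1 hg2 using key
  set f : {c : Ordinal // c ∈ X} → {c : Ordinal // c ∈ X} := fun c => ⟨g c, hg1 c⟩ with hf
  -- start
  have hstar : star ξ < OmegaO := star_lt_OmegaO ξ hξ
  obtain ⟨t0, ht0X, ht0⟩ := hX.2.1 _ hstar
  set θ : ℕ → Ordinal := fun n => (f^[n] ⟨t0, ht0X⟩).1 with hθ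
  have hθX : ∀ n, θ n ∈ X := fun n => (f^[n] ⟨t0, ht0X⟩).2
  have hθsucc : ∀ n, max (θ n) (B (θ n)) < θ (n + 1) := by
    intro n
    have : f^[n+1] ⟨t0, ht0X⟩ = f (f^[n] ⟨t0, ht0X⟩) := Function.iterate_succ_apply' f n _
    simp only [hθ, this]
    exact hg2 _
  set w := sSup (range θ) with hw
  have hbdd : BddAbove (range θ) := Ordinal.bddAbove_range θ
  have hne : (range θ).Nonempty := range_nonempty θ
  have hwlt : w < OmegaO :=
    sSup_lt_OmegaO (countable_range θ) (by rintro x ⟨n, rfl⟩; exact hX.1 _ (hθX n))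
  have hθle : ∀ n, θ n ≤ w := fun n => le_csSup hbdd (mem_range_self n)
  refine ⟨w, ?_, ?_, ?_⟩
  · exact hX.2.2 _ (by rintro x ⟨n, rfl⟩; exact hθX n) hne hwlt
  · calc star ξ < t0 := ht0
      _ = θ 0 := rfl
      _ ≤ w := hθle 0
  · intro ζ h1 h2
    obtain ⟨x, ⟨n, rfl⟩, hx⟩ := exists_lt_of_lt_csSup hne (hw ▸ h2)
    calc ThetaF X ζ ≤ B (θ n) := hBge _ (hX.1 _ (hθX n)) ζ h1 hx
      _ < θ (n+1) := lt_of_le_of_lt (le_max_right _ _) (hθsucc n)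
      _ ≤ w := hθle (n+1)

/-- `Θ_X(α) < Θ_X(β)` iff `α* < Θ_X(β)`, for `α < β < ε_{Ω+1}`. -/
theorem stmt4 (X : Set Ordinal) (hX : IsClubBelowOmega X) (h0X : 0 ∉ X)
    (α β : Ordinal) (h1 : α < β) (h2 : β < epsOmega) :
    ThetaF X α < ThetaF X β ↔ star α < ThetaF X β := by
  have hβ : ThetaF X β ∈ {θ | θ ∈ X ∧ star β < θ ∧ ∀ ζ, ζ < β → star ζ < θ → ThetaF X ζ < θ} := by
    rw [ThetaF_def]
    exact csInf_mem (TS_nonempty hX h2)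
  have hα : ThetaF X α ∈ {θ | θ ∈ X ∧ star α < θ ∧ ∀ ζ, ζ < α → star ζ < θ → ThetaF X ζ < θ} := by
    rw [ThetaF_def]
    exact csInf_mem (TS_nonempty hX (h1.trans h2))
  constructor
  · intro h
    exact hα.2.1.trans h
  · intro h
    exact hβ.2.2 α h1 h

end
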